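/- There exists N such that for all natural numbers m ≥ N, (Finset.range (m+1)).sum (fun j => (m.choose j) * ((3*m).choose (m−j)) * ((4*m−j).choose m)) ≤ (0.94 : ℝ)^m * ((4*m).choose m)^2. -/

import Mathlib

open Finset Filter

lemma choose_mul_pow_le {n k : ℕ} (hk : k ≤ n) {a : ℝ} (ha : 0 ≤ a) :
    (n.choose k : ℝ) * a ^ k ≤ (1 + a) ^ n := by
  have h : (a + 1 : ℝ) ^ n = ∑ i ∈ range (n + 1), a ^ i * 1 ^ (n - i) * (n.choose i : ℝ) :=
    add_pow a 1 n
  have hterm : ∀ i ∈ range (n + 1), (0 : ℝ) ≤ a ^ i * 1 ^ (n - i) * (n.choose i : ℝ) := by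
    intro i _; positivity
  have hmem : k ∈ range (n + 1) := mem_range.mpr (Nat.lt_succ_of_le hk)
  have h2 := Finset.single_le_sum hterm hmem
  rw [← h] at h2
  calc (n.choose k : ℝ) * a ^ k = a ^ k * 1 ^ (n - k) * (n.choose k : ℝ) := by ring
    _ ≤ (a + 1) ^ n := h2
    _ = (1 + a) ^ n := by ring

lemma step4 {m n : ℕ} (h1 : 3 * m + 1 ≤ n) (h2 : n ≤ 4 * m) :
    4 * Nat.choose (n - 1) m ≤ 3 * Nat.choose n m := by
  obtain ⟨m', rfl⟩ : ∃ m', m = m' + 1 := ⟨m - 1, by omega⟩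
  obtain ⟨n', rfl⟩ : ∃ n', n = n' + 1 := ⟨n - 1, by omega⟩
  simp only [Nat.add_sub_cancel]
  rw [Nat.choose_succ_succ]
  have key : n'.choose (m' + 1) ≤ 3 * n'.choose m' := by
    have h := Nat.choose_succ_right_eq n' m'
    have hsub : n' - m' ≤ 3 * (m' + 1) := by omega
    have h3 : n'.choose (m' + 1) * (m' + 1) ≤ 3 * n'.choose m' * (m' + 1) := by
      rw [h]
      calc n'.choose m' * (n' - m') ≤ n'.choose m' * (3 * (m' + 1)) :=
            Nat.mul_le_mul_left _ hsub
        _ = 3 * n'.choose m' * (m' + 1) := by ring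
    exact Nat.le_of_mul_le_mul_right h3 (Nat.succ_pos m')
  simp only [Nat.succ_eq_add_one] at *
  omega

lemma ratio_bound (m : ℕ) : ∀ j, j ≤ m →
    (4 * m - j).choose m * 4 ^ j ≤ (4 * m).choose m * 3 ^ j := by
  intro j
  induction j with
  | zero => simp
  | succ j ih =>
    intro hj
    have hj' : j ≤ m := by omega
    have h4 : 4 * ((4 * m - j) - 1).choose m ≤ 3 * (4 * m - j).choose m :=
      step4 (by omega) (by omega)
    have heq : 4 * m - (j + 1) = (4 * m - j) - 1 := by omega
    calc (4 * m - (j + 1)).choose m * 4 ^ (j + 1)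
        = 4 * ((4 * m - j) - 1).choose m * 4 ^ j := by rw [heq]; ring
      _ ≤ 3 * (4 * m - j).choose m * 4 ^ j := Nat.mul_le_mul_right _ h4
      _ = 3 * ((4 * m - j).choose m * 4 ^ j) := by ring
      _ ≤ 3 * ((4 * m).choose m * 3 ^ j) := Nat.mul_le_mul_left _ (ih hj')
      _ = (4 * m).choose m * 3 ^ (j + 1) := by ring

lemma maxterm (m : ℕ) : ∀ k, (4 * m).choose k * 3 ^ (4 * m - k) ≤ (4 * m).choose m * 3 ^ (3 * m) := by
  set n := 4 * m with hn
  have hup : ∀ k, k < m → n.choose k * 3 ^ (n - k) ≤ n.choose (k + 1) * 3 ^ (n - (k + 1)) := by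
    intro k hk
    have h := Nat.choose_succ_right_eq n k
    have hle : 3 * (k + 1) ≤ n - k := by omega
    have key : 3 * n.choose k ≤ n.choose (k + 1) := by
      have h3 : 3 * n.choose k * (k + 1) ≤ n.choose (k + 1) * (k + 1) := by
        rw [h]
        calc 3 * n.choose k * (k + 1) = n.choose k * (3 * (k + 1)) := by ring
          _ ≤ n.choose k * (n - k) := Nat.mul_le_mul_left _ hle
      exact Nat.le_of_mul_le_mul_right h3 (Nat.succ_pos k)
    have hexp : n - k = (n - (k + 1)) + 1 := by omega
    calc n.choose k * 3 ^ (n - k) = 3 * n.choose k * 3 ^ (n - (k + 1)) := by rw [hexp]; ring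
      _ ≤ n.choose (k + 1) * 3 ^ (n - (k + 1)) := Nat.mul_le_mul_right _ key
  have hdown : ∀ k, m ≤ k → n.choose (k + 1) * 3 ^ (n - (k + 1)) ≤ n.choose k * 3 ^ (n - k) := by
    intro k hk
    by_cases hkn : n ≤ k
    · simp [Nat.choose_eq_zero_of_lt (by omega : n < k + 1)]
    · push_neg at hkn
      have h := Nat.choose_succ_right_eq n k
      have hle : n - k ≤ 3 * (k + 1) := by omega
      have key : n.choose (k + 1) ≤ 3 * n.choose k := by
        have h3 : n.choose (k + 1) * (k + 1) ≤ 3 * n.choose k * (k + 1) := by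
          rw [h]
          calc n.choose k * (n - k) ≤ n.choose k * (3 * (k + 1)) := Nat.mul_le_mul_left _ hle
            _ = 3 * n.choose k * (k + 1) := by ring
        exact Nat.le_of_mul_le_mul_right h3 (Nat.succ_pos k)
      have hexp : n - k = (n - (k + 1)) + 1 := by omega
      calc n.choose (k + 1) * 3 ^ (n - (k + 1)) ≤ 3 * n.choose k * 3 ^ (n - (k + 1)) :=
            Nat.mul_le_mul_right _ key
        _ = n.choose k * 3 ^ (n - k) := by rw [hexp]; ring
  have hm : n - m = 3 * m := by omega
  have hupall : ∀ i, i ≤ m → n.choose (m - i) * 3 ^ (n - (m - i)) ≤ n.choose m * 3 ^ (3 * m) := by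
    intro i
    induction i with
    | zero => intro _; simp [hm]
    | succ i ih =>
      intro hi
      have hi' : i ≤ m := by omega
      have h1 : m - (i + 1) < m := by omega
      have h2 : m - (i + 1) + 1 = m - i := by omega
      calc n.choose (m - (i + 1)) * 3 ^ (n - (m - (i + 1)))
          ≤ n.choose (m - (i + 1) + 1) * 3 ^ (n - (m - (i + 1) + 1)) := hup _ h1
        _ = n.choose (m - i) * 3 ^ (n - (m - i)) := by rw [h2]
        _ ≤ n.choose m * 3 ^ (3 * m) := ih hi'
  intro k
  rcases le_or_gt k m with hk | hk
  · have := hupall (m - k) (by omega)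
    have hmk : m - (m - k) = k := by omega
    rwa [hmk] at this
  · have hge : ∀ k, m ≤ k → n.choose k * 3 ^ (n - k) ≤ n.choose m * 3 ^ (3 * m) := by
      intro k hk
      induction k, hk using Nat.le_induction with
      | base => simp [hm]
      | succ k hk ih => exact le_trans (hdown k hk) ih
    exact hge k (le_of_lt hk)

lemma lowerC (m : ℕ) : 256 ^ m ≤ (4 * m + 1) * ((4 * m).choose m * 27 ^ m) := by
  have h : (1 + 3 : ℕ) ^ (4 * m) =
      ∑ i ∈ range (4 * m + 1), 1 ^ i * 3 ^ (4 * m - i) * (4 * m).choose i := add_pow 1 3 (4 * m)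
  have hb : ∀ i ∈ range (4 * m + 1),
      1 ^ i * 3 ^ (4 * m - i) * (4 * m).choose i ≤ (4 * m).choose m * 27 ^ m := by
    intro i _
    have h1 := maxterm m i
    have h27 : (27 : ℕ) ^ m = 3 ^ (3 * m) := by rw [pow_mul]; norm_num
    rw [one_pow, one_mul, h27, mul_comm]
    exact h1
  have hsum : ∑ i ∈ range (4 * m + 1), 1 ^ i * 3 ^ (4 * m - i) * (4 * m).choose i ≤
      (4 * m + 1) * ((4 * m).choose m * 27 ^ m) := by
    calc ∑ i ∈ range (4 * m + 1), 1 ^ i * 3 ^ (4 * m - i) * (4 * m).choose i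
        ≤ ∑ _i ∈ range (4 * m + 1), (4 * m).choose m * 27 ^ m := Finset.sum_le_sum hb
      _ = (4 * m + 1) * ((4 * m).choose m * 27 ^ m) := by
          rw [Finset.sum_const, Finset.card_range, smul_eq_mul]
  have h256 : (256 : ℕ) ^ m = (1 + 3) ^ (4 * m) := by
    norm_num [pow_mul]
  rw [h256, h]
  exact hsum

lemma tail_bound : ∃ N : ℕ, ∀ m : ℕ, N ≤ m →
    ((m : ℝ) + 1) * (4 * (m : ℝ) + 1) * ((53675541 / 53903360 : ℝ)) ^ m ≤ 1 := by
  have hr0 : (0 : ℝ) ≤ 53675541 / 53903360 := by norm_num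
  have hr1 : (53675541 / 53903360 : ℝ) < 1 := by norm_num
  have h := tendsto_pow_const_mul_const_pow_of_lt_one 2 hr0 hr1
  have h2 : ∀ᶠ n : ℕ in atTop, (n : ℝ) ^ 2 * (53675541 / 53903360 : ℝ) ^ n < 1 / 10 :=
    h.eventually_lt_const (by norm_num)
  have h3 : ∀ᶠ n : ℕ in atTop, 1 ≤ n := eventually_ge_atTop 1
  obtain ⟨N, hN⟩ := (h2.and h3).exists_forall_of_atTop
  refine ⟨N, fun m hm => ?_⟩
  obtain ⟨hlt, hm1⟩ := hN m hm
  have hm1' : (1 : ℝ) ≤ (m : ℝ) := by exact_mod_cast hm1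
  have hpow : (0 : ℝ) ≤ (53675541 / 53903360 : ℝ) ^ m := by positivity
  have hpoly : ((m : ℝ) + 1) * (4 * (m : ℝ) + 1) ≤ 10 * (m : ℝ) ^ 2 := by nlinarith
  calc ((m : ℝ) + 1) * (4 * (m : ℝ) + 1) * ((53675541 / 53903360 : ℝ)) ^ m
      ≤ 10 * (m : ℝ) ^ 2 * ((53675541 / 53903360 : ℝ)) ^ m :=
        mul_le_mul_of_nonneg_right hpoly hpow
    _ = 10 * ((m : ℝ) ^ 2 * ((53675541 / 53903360 : ℝ)) ^ m) := by ring
    _ ≤ 10 * (1 / 10) := by nlinarith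
    _ = 1 := by norm_num

theorem prob_bound_q4 :
    ∃ N : ℕ, ∀ m : ℕ, N ≤ m →
      (((Finset.range (m + 1)).sum
          (fun j => (m.choose j) * ((3 * m).choose (m - j)) * ((4 * m - j).choose m)) : ℕ) : ℝ) ≤
        (0.94 : ℝ) ^ m * (((4 * m).choose m : ℝ)) ^ 2 := by
  obtain ⟨N0, hN0⟩ := tail_bound
  refine ⟨max N0 1, fun m hm => ?_⟩
  have hm1 : 1 ≤ m := le_trans (le_max_right _ _) hm
  have hN : N0 ≤ m := le_trans (le_max_left _ _) hm
  set C : ℝ := ((4 * m).choose m : ℝ) with hCdef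
  have hCpos : 0 < C := by
    have h := Nat.choose_pos (show m ≤ 4 * m by omega)
    rw [hCdef]; exact_mod_cast h
  set Q : ℝ := (101 / 80 : ℝ) ^ m * (27 / 20 : ℝ) ^ (3 * m) * (20 / 7 : ℝ) ^ m with hQdef
  have hterm : ∀ j ∈ range (m + 1),
      ((m.choose j : ℝ) * (((3 * m).choose (m - j) : ℝ)) * (((4 * m - j).choose m : ℝ))) ≤ Q * C := by
    intro j hj
    have hjm : j ≤ m := Nat.lt_succ_iff.mp (mem_range.mp hj)
    have hB : ((4 * m - j).choose m : ℝ) ≤ (3 / 4 : ℝ) ^ j * C := by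
      have h := ratio_bound m j hjm
      have h' : ((4 * m - j).choose m : ℝ) * 4 ^ j ≤ ((4 * m).choose m : ℝ) * 3 ^ j := by
        exact_mod_cast h
      have h4 : (0 : ℝ) < 4 ^ j := by positivity
      rw [hCdef, show (3 / 4 : ℝ) ^ j * ((4 * m).choose m : ℝ) =
        3 ^ j * ((4 * m).choose m : ℝ) / 4 ^ j by rw [div_pow]; ring, le_div_iff₀ h4]
      linarith
    have t1 : (m.choose j : ℝ) * (21 / 80 : ℝ) ^ j ≤ (101 / 80 : ℝ) ^ m := by
      calc (m.choose j : ℝ) * (21 / 80 : ℝ) ^ j ≤ (1 + 21 / 80 : ℝ) ^ m :=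
            choose_mul_pow_le hjm (by norm_num)
        _ = (101 / 80 : ℝ) ^ m := by norm_num
    have t2 : (((3 * m).choose (m - j) : ℝ)) * (7 / 20 : ℝ) ^ (m - j) ≤ (27 / 20 : ℝ) ^ (3 * m) := by
      calc (((3 * m).choose (m - j) : ℝ)) * (7 / 20 : ℝ) ^ (m - j) ≤ (1 + 7 / 20 : ℝ) ^ (3 * m) :=
            choose_mul_pow_le (show m - j ≤ 3 * m by omega) (by norm_num)
        _ = (27 / 20 : ℝ) ^ (3 * m) := by norm_num
    have t3 : (m.choose j : ℝ) * (((3 * m).choose (m - j) : ℝ)) *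
        ((21 / 80 : ℝ) ^ j * (7 / 20 : ℝ) ^ (m - j)) ≤
        (101 / 80 : ℝ) ^ m * (27 / 20 : ℝ) ^ (3 * m) := by
      calc (m.choose j : ℝ) * (((3 * m).choose (m - j) : ℝ)) *
          ((21 / 80 : ℝ) ^ j * (7 / 20 : ℝ) ^ (m - j))
          = ((m.choose j : ℝ) * (21 / 80 : ℝ) ^ j) *
            ((((3 * m).choose (m - j) : ℝ)) * (7 / 20 : ℝ) ^ (m - j)) := by ring
        _ ≤ (101 / 80 : ℝ) ^ m * (27 / 20 : ℝ) ^ (3 * m) :=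
            mul_le_mul t1 t2 (by positivity) (by positivity)
    have hpow : (21 / 80 : ℝ) ^ j * (7 / 20 : ℝ) ^ (m - j) = (3 / 4 : ℝ) ^ j * (7 / 20 : ℝ) ^ m := by
      have h1 : (21 / 80 : ℝ) ^ j = (3 / 4 : ℝ) ^ j * (7 / 20 : ℝ) ^ j := by
        rw [← mul_pow]; norm_num
      rw [h1, mul_assoc, ← pow_add, Nat.add_sub_cancel' hjm]
    rw [hpow] at t3
    have t4 : (m.choose j : ℝ) * (((3 * m).choose (m - j) : ℝ)) * (3 / 4 : ℝ) ^ j ≤ Q := by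
      have h720 : (0 : ℝ) < (7 / 20 : ℝ) ^ m := by positivity
      have hone : (20 / 7 : ℝ) ^ m * (7 / 20 : ℝ) ^ m = 1 := by rw [← mul_pow]; norm_num
      have hQm : Q * (7 / 20 : ℝ) ^ m = (101 / 80 : ℝ) ^ m * (27 / 20 : ℝ) ^ (3 * m) := by
        rw [hQdef, mul_assoc ((101 / 80 : ℝ) ^ m * (27 / 20 : ℝ) ^ (3 * m)), hone, mul_one]
      have hmul : (m.choose j : ℝ) * (((3 * m).choose (m - j) : ℝ)) * (3 / 4 : ℝ) ^ j *
          (7 / 20 : ℝ) ^ m ≤ Q * (7 / 20 : ℝ) ^ m := by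
        rw [hQm]
        calc (m.choose j : ℝ) * (((3 * m).choose (m - j) : ℝ)) * (3 / 4 : ℝ) ^ j * (7 / 20 : ℝ) ^ m
            = (m.choose j : ℝ) * (((3 * m).choose (m - j) : ℝ)) *
              ((3 / 4 : ℝ) ^ j * (7 / 20 : ℝ) ^ m) := by ring
          _ ≤ _ := t3
      exact le_of_mul_le_mul_right hmul h720
    have hnn : (0 : ℝ) ≤ (m.choose j : ℝ) * (((3 * m).choose (m - j) : ℝ)) := by positivity
    calc (m.choose j : ℝ) * (((3 * m).choose (m - j) : ℝ)) * (((4 * m - j).choose m : ℝ))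
        ≤ (m.choose j : ℝ) * (((3 * m).choose (m - j) : ℝ)) * ((3 / 4 : ℝ) ^ j * C) :=
          mul_le_mul_of_nonneg_left hB hnn
      _ = ((m.choose j : ℝ) * (((3 * m).choose (m - j) : ℝ)) * (3 / 4 : ℝ) ^ j) * C := by ring
      _ ≤ Q * C := mul_le_mul_of_nonneg_right t4 (le_of_lt hCpos)
  have hsum : (((Finset.range (m + 1)).sum
      (fun j => (m.choose j) * ((3 * m).choose (m - j)) * ((4 * m - j).choose m)) : ℕ) : ℝ) ≤
      ((m : ℝ) + 1) * (Q * C) := by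
    push_cast
    calc ∑ j ∈ range (m + 1),
        (m.choose j : ℝ) * (((3 * m).choose (m - j) : ℝ)) * (((4 * m - j).choose m : ℝ))
        ≤ ∑ _j ∈ range (m + 1), Q * C := Finset.sum_le_sum hterm
      _ = ((m : ℝ) + 1) * (Q * C) := by
          rw [Finset.sum_const, Finset.card_range, nsmul_eq_mul]; push_cast; ring
  have hQval : Q = (1987983 / 224000 : ℝ) ^ m := by
    rw [hQdef, pow_mul, ← mul_pow, ← mul_pow]; norm_num
  have hlower : (256 / 27 : ℝ) ^ m ≤ (4 * (m : ℝ) + 1) * C := by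
    have h := lowerC m
    have h' : (256 : ℝ) ^ m ≤ (4 * (m : ℝ) + 1) * (((4 * m).choose m : ℝ) * 27 ^ m) := by
      exact_mod_cast h
    rw [hCdef]
    rw [div_pow, div_le_iff₀ (by positivity : (0 : ℝ) < 27 ^ m)]
    calc (256 : ℝ) ^ m ≤ (4 * (m : ℝ) + 1) * (C * 27 ^ m) := h'
      _ = (4 * (m : ℝ) + 1) * C * 27 ^ m := by ring
  have hr : ((m : ℝ) + 1) * (4 * (m : ℝ) + 1) * ((53675541 / 53903360 : ℝ)) ^ m ≤ 1 :=
    hN0 m hN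
  have hqsplit : (1987983 / 224000 : ℝ) ^ m =
      (53675541 / 53903360 : ℝ) ^ m * (12032 / 1350 : ℝ) ^ m := by
    rw [← mul_pow]; norm_num
  have hrhs : (0.94 : ℝ) ^ m * (256 / 27 : ℝ) ^ m = (12032 / 1350 : ℝ) ^ m := by
    rw [← mul_pow]; norm_num
  have key : ((m : ℝ) + 1) * Q ≤ (0.94 : ℝ) ^ m * C := by
    have hpos41 : (0 : ℝ) < 4 * (m : ℝ) + 1 := by positivity
    rw [← mul_le_mul_iff_right₀ hpos41]
    have h094 : (0 : ℝ) ≤ (0.94 : ℝ) ^ m := by positivity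
    calc (4 * (m : ℝ) + 1) * (((m : ℝ) + 1) * Q)
        = ((m : ℝ) + 1) * (4 * (m : ℝ) + 1) * ((53675541 / 53903360 : ℝ)) ^ m *
          (12032 / 1350 : ℝ) ^ m := by rw [hQval, hqsplit]; ring
      _ ≤ 1 * (12032 / 1350 : ℝ) ^ m :=
          mul_le_mul_of_nonneg_right hr (by positivity)
      _ = (0.94 : ℝ) ^ m * (256 / 27 : ℝ) ^ m := by rw [hrhs]; ring
      _ ≤ (0.94 : ℝ) ^ m * ((4 * (m : ℝ) + 1) * C) := mul_le_mul_of_nonneg_left hlower h094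
      _ = (4 * (m : ℝ) + 1) * ((0.94 : ℝ) ^ m * C) := by ring
  calc (((Finset.range (m + 1)).sum
      (fun j => (m.choose j) * ((3 * m).choose (m - j)) * ((4 * m - j).choose m)) : ℕ) : ℝ)
      ≤ ((m : ℝ) + 1) * (Q * C) := hsum
    _ = (((m : ℝ) + 1) * Q) * C := by ring
    _ ≤ ((0.94 : ℝ) ^ m * C) * C := mul_le_mul_of_nonneg_right key (le_of_lt hCpos)
    _ = (0.94 : ℝ) ^ m * C ^ 2 := by ring
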